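/- arXiv:math/0502274 — 4 statements merged into one kernel-verified Lean document; each statement's English description precedes it below -/
import Mathlib

section
/- Let (Y, μ) be a measure space, F ⊆ Y a measurable set, Q : Y → [0,∞) measurable and P : Y → ℂ measurable. Assume ∫_F Q dμ ≤ 1 and ∫_F Q|P|² dμ ≤ 1. Then ∫_F Q·|P| dμ ≤ (1/2)(∫_F Q dμ + ∫_F Q·|P|² dμ) − (1/8)(∫_F Q·||P|²−1| dμ)². -/
open MeasureTheory

/-- Cauchy–Schwarz inequality for integrals of real functions. -/
lemma integral_cauchy_schwarz {α : Type*} [MeasurableSpace α] (ν : Measure α)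
    (f g : α → ℝ) (hf2 : Integrable (fun x => f x * f x) ν)
    (hg2 : Integrable (fun x => g x * g x) ν)
    (hfg : Integrable (fun x => f x * g x) ν) :
    (∫ x, f x * g x ∂ν) ^ 2 ≤ (∫ x, f x * f x ∂ν) * ∫ x, g x * g x ∂ν := by
  set A := ∫ x, f x * f x ∂ν
  set B := ∫ x, f x * g x ∂ν
  set C := ∫ x, g x * g x ∂ν
  have key : ∀ t : ℝ, 0 ≤ A * (t * t) + (2 * B) * t + C := by
    intro t
    have h1 : ∀ x, 0 ≤ (f x * f x) * (t * t) + 2 * (f x * g x) * t + g x * g x := by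
      intro x; have := sq_nonneg (t * f x + g x); nlinarith [this]
    have i1 : Integrable (fun x => (f x * f x) * (t * t)) ν := hf2.mul_const (t * t)
    have i2 : Integrable (fun x => 2 * (f x * g x) * t) ν := (hfg.const_mul 2).mul_const t
    have i12 : Integrable (fun x => (f x * f x) * (t * t) + 2 * (f x * g x) * t) ν := i1.add i2
    have h3 : 0 ≤ ∫ x, (f x * f x) * (t * t) + 2 * (f x * g x) * t + g x * g x ∂ν :=
      integral_nonneg h1
    have h4 : ∫ x, (f x * f x) * (t * t) + 2 * (f x * g x) * t + g x * g x ∂ν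
        = A * (t * t) + (2 * B) * t + C := by
      rw [integral_add i12 hg2, integral_add i1 i2,
        integral_mul_const, integral_mul_const, integral_const_mul]
    linarith [h4 ▸ h3]
  have := discrim_le_zero key
  unfold discrim at this
  nlinarith [this]

/-- **Bourgain's basic inequality** (Lemma 3.4).
Let `(Y, μ)` be a measure space, `F ⊆ Y` measurable, `Q : Y → [0,∞)` measurable and
`P : Y → ℂ` measurable.  Assume `∫_F Q dμ ≤ 1` and `∫_F Q |P|² dμ ≤ 1`.  Then
`∫_F Q |P| dμ ≤ (1/2) (∫_F Q dμ + ∫_F Q |P|² dμ) − (1/8) (∫_F Q ||P|² − 1| dμ)²`. -/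
theorem stmt0 {Y : Type*} [MeasurableSpace Y] (μ : Measure Y) (F : Set Y)
    (hF : MeasurableSet F) (Q : Y → ℝ) (P : Y → ℂ)
    (hQmeas : Measurable Q) (hQnonneg : ∀ y, 0 ≤ Q y) (hPmeas : Measurable P)
    (hQint : IntegrableOn Q F μ)
    (hQP2int : IntegrableOn (fun y => Q y * ‖P y‖ ^ 2) F μ)
    (hQ1 : ∫ y in F, Q y ∂μ ≤ 1)
    (hQP2 : ∫ y in F, Q y * ‖P y‖ ^ 2 ∂μ ≤ 1) :
    ∫ y in F, Q y * ‖P y‖ ∂μ ≤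
      (1 / 2) * ((∫ y in F, Q y ∂μ) + ∫ y in F, Q y * ‖P y‖ ^ 2 ∂μ)
        - (1 / 8) * (∫ y in F, Q y * |‖P y‖ ^ 2 - 1| ∂μ) ^ 2 := by
  set ν := μ.restrict F with hν
  set t : Y → ℝ := fun y => ‖P y‖ with ht
  have htnn : ∀ y, 0 ≤ t y := fun y => norm_nonneg _
  have htm : Measurable t := hPmeas.norm
  -- integrability of Q * t
  have hQt_int : Integrable (fun y => Q y * t y) ν := by
    have ib : Integrable (fun y => Q y + Q y * t y ^ 2) ν := hQint.add hQP2int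
    refine Integrable.mono' ib ((hQmeas.mul htm).aestronglyMeasurable)
      (Filter.Eventually.of_forall fun y => ?_)
    have h1 : t y ≤ 1 + t y ^ 2 := by nlinarith [sq_nonneg (t y - 1)]
    have : Q y * t y ≤ Q y + Q y * t y ^ 2 := by nlinarith [hQnonneg y]
    rw [Real.norm_eq_abs, abs_of_nonneg (mul_nonneg (hQnonneg y) (htnn y))]
    exact this
  -- integrability of Q * |t^2 - 1|
  have hQd_int : Integrable (fun y => Q y * |t y ^ 2 - 1|) ν := by
    have ib : Integrable (fun y => Q y * t y ^ 2 + Q y) ν := hQP2int.add hQint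
    refine Integrable.mono' ib ((hQmeas.mul
      ((htm.pow_const 2).sub measurable_const).abs).aestronglyMeasurable)
      (Filter.Eventually.of_forall fun y => ?_)
    rw [Real.norm_eq_abs, abs_of_nonneg (mul_nonneg (hQnonneg y) (abs_nonneg _))]
    have := abs_sub (t y ^ 2) (1 : ℝ)
    have h1 : |t y ^ 2 - 1| ≤ t y ^ 2 + 1 := by
      have := abs_sub_abs_le_abs_sub (t y ^ 2) (1:ℝ)
      rw [abs_sub_comm]
      calc |1 - t y ^ 2| ≤ |(1:ℝ)| + |t y ^ 2| := abs_sub _ _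
        _ = t y ^ 2 + 1 := by rw [abs_one, abs_of_nonneg (sq_nonneg _)]; ring
    nlinarith [hQnonneg y]
  -- notation for the integrals
  set A := ∫ y, Q y ∂ν with hA
  set B := ∫ y, Q y * t y ∂ν with hB
  set C := ∫ y, Q y * t y ^ 2 ∂ν with hC
  set D := ∫ y, Q y * |t y ^ 2 - 1| ∂ν with hD
  have hA0 : 0 ≤ A := integral_nonneg fun y => hQnonneg y
  have hB0 : 0 ≤ B := integral_nonneg fun y => mul_nonneg (hQnonneg y) (htnn y)
  have hC0 : 0 ≤ C := integral_nonneg fun y => mul_nonneg (hQnonneg y) (sq_nonneg _)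
  have hD0 : 0 ≤ D := integral_nonneg fun y => mul_nonneg (hQnonneg y) (abs_nonneg _)
  -- sqrt Q
  set s : Y → ℝ := fun y => Real.sqrt (Q y) with hs
  have hsm : Measurable s := hQmeas.sqrt
  have hss : ∀ y, s y * s y = Q y := fun y => Real.mul_self_sqrt (hQnonneg y)
  -- First Cauchy-Schwarz: B^2 ≤ A * C
  have hcs1 : B ^ 2 ≤ A * C := by
    have h := integral_cauchy_schwarz ν s (fun y => s y * t y)
      (by simp only [hss]; exact hQint)
      (by
        have : (fun y => (s y * t y) * (s y * t y)) = fun y => Q y * t y ^ 2 := by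
          funext y; rw [← hss y]; ring
        rw [this]; exact hQP2int)
      (by
        have : (fun y => s y * (s y * t y)) = fun y => Q y * t y := by
          funext y; rw [← hss y]; ring
        rw [this]; exact hQt_int)
    have e1 : (fun y => s y * (s y * t y)) = fun y => Q y * t y := by
      funext y; rw [← hss y]; ring
    have e2 : (fun y => s y * s y) = fun y => Q y := by funext y; exact hss y
    have e3 : (fun y => (s y * t y) * (s y * t y)) = fun y => Q y * t y ^ 2 := by
      funext y; rw [← hss y]; ring
    rw [e1, e2, e3] at h
    exact h
  have hB1 : B ≤ 1 := by nlinarith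
  -- integrability of Q*(t-1)^2 and Q*(t+1)^2
  have j1 : Integrable (fun y => 2 * (Q y * t y)) ν := hQt_int.const_mul 2
  have jm : Integrable (fun y => Q y * t y ^ 2 - 2 * (Q y * t y)) ν := hQP2int.sub j1
  have jp : Integrable (fun y => Q y * t y ^ 2 + 2 * (Q y * t y)) ν := hQP2int.add j1
  have hQm_int : Integrable (fun y => Q y * (t y - 1) ^ 2) ν := by
    have h : (fun y => Q y * (t y - 1) ^ 2)
        = fun y => (Q y * t y ^ 2 - 2 * (Q y * t y)) + Q y := by funext y; ring
    rw [h]; exact jm.add hQint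
  have hQp_int : Integrable (fun y => Q y * (t y + 1) ^ 2) ν := by
    have h : (fun y => Q y * (t y + 1) ^ 2)
        = fun y => (Q y * t y ^ 2 + 2 * (Q y * t y)) + Q y := by funext y; ring
    rw [h]; exact jp.add hQint
  -- values of those integrals
  have hE : ∫ y, Q y * (t y - 1) ^ 2 ∂ν = C - 2 * B + A := by
    have : (fun y => Q y * (t y - 1) ^ 2)
        = fun y => (Q y * t y ^ 2 - 2 * (Q y * t y)) + Q y := by funext y; ring
    rw [this, integral_add jm hQint, integral_sub hQP2int j1, integral_const_mul]
  have hG : ∫ y, Q y * (t y + 1) ^ 2 ∂ν = C + 2 * B + A := by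
    have : (fun y => Q y * (t y + 1) ^ 2)
        = fun y => (Q y * t y ^ 2 + 2 * (Q y * t y)) + Q y := by funext y; ring
    rw [this, integral_add jp hQint, integral_add hQP2int j1, integral_const_mul]
  -- Second Cauchy-Schwarz: D^2 ≤ (C - 2B + A)(C + 2B + A)
  have hcs2 : D ^ 2 ≤ (C - 2 * B + A) * (C + 2 * B + A) := by
    have e2 : (fun y => (s y * |t y - 1|) * (s y * |t y - 1|))
        = fun y => Q y * (t y - 1) ^ 2 := by
      funext y; rw [← hss y, ← sq_abs (t y - 1)]; ring
    have e3 : (fun y => (s y * (t y + 1)) * (s y * (t y + 1)))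
        = fun y => Q y * (t y + 1) ^ 2 := by
      funext y; rw [← hss y]; ring
    have e1 : (fun y => (s y * |t y - 1|) * (s y * (t y + 1)))
        = fun y => Q y * |t y ^ 2 - 1| := by
      funext y
      have h1 : |t y ^ 2 - 1| = |t y - 1| * (t y + 1) := by
        rw [show t y ^ 2 - 1 = (t y - 1) * (t y + 1) by ring, abs_mul,
          abs_of_nonneg (by linarith [htnn y] : (0:ℝ) ≤ t y + 1)]
      rw [h1, ← hss y]; ring
    have h := integral_cauchy_schwarz ν (fun y => s y * |t y - 1|)
      (fun y => s y * (t y + 1))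
      (by rw [e2]; exact hQm_int)
      (by rw [e3]; exact hQp_int)
      (by rw [e1]; exact hQd_int)
    rw [e1, e2, e3, hE, hG] at h
    exact h
  -- conclusion
  show B ≤ (1/2) * (A + C) - (1/8) * D ^ 2
  have hG4 : C + 2 * B + A ≤ 4 := by linarith
  have hE0 : 0 ≤ C - 2 * B + A := hE ▸ integral_nonneg
    (fun y => mul_nonneg (hQnonneg y) (sq_nonneg _))
  nlinarith [hcs2, hE0, hG4, sq_nonneg D]
end

section
/- Let 𝕋 be the unit circle with normalized Haar measure λ, F ⊆ 𝕋 closed, Q : 𝕋 → [0,∞) continuous, and (P_m) a sequence of continuous functions on 𝕋 such that the measures |P_m|²·λ converge weakly to λ, ∫_F Q dλ ≤ 1, and ∫_F Q|P_m|² dλ ≤ 1 for all m. Then liminf_{m→∞} ∫_F Q|P_m| dλ ≤ ∫_F Q dλ − (1/8)(limsup_{m→∞} ∫_F Q·||P_m|²−1| dλ)². -/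
open MeasureTheory Filter Topology NNReal

noncomputable section

instance : MeasurableSpace Circle := borel Circle
instance : BorelSpace Circle := ⟨rfl⟩

/-- The normalized Haar (Lebesgue) measure on the unit circle. -/
def haarCircle : Measure Circle := Measure.haarMeasure ⊤

instance : IsProbabilityMeasure haarCircle :=
  ⟨by rw [haarCircle, ← TopologicalSpace.PositiveCompacts.coe_top (α := Circle)]
      exact Measure.haarMeasure_self⟩

lemma integrable_of_continuous {g : Circle → ℝ} (hg : Continuous g) :
    Integrable g haarCircle :=
  hg.integrable_of_hasCompactSupport (HasCompactSupport.of_compactSpace _)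

set_option maxHeartbeats 1000000 in
/-- **Lemma 3.6.**
Let `𝕋` be the unit circle with normalized Haar measure `λ`, `F ⊆ 𝕋` closed,
`Q : 𝕋 → [0,∞)` continuous, and `(P_m)` a sequence of continuous functions on `𝕋` such that
the measures `|P_m|² λ` converge weakly to `λ`, `∫_F Q dλ ≤ 1` and `∫_F Q |P_m|² dλ ≤ 1`
for all `m`.  Then
`liminf_m ∫_F Q |P_m| dλ ≤ ∫_F Q dλ − (1/8) (limsup_m ∫_F Q ||P_m|² − 1| dλ)²`. -/
theorem stmt2 (F : Set Circle) (hF : IsClosed F)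
    (Q : Circle → ℝ) (hQcont : Continuous Q) (hQnonneg : ∀ z, 0 ≤ Q z)
    (P : ℕ → Circle → ℂ) (hPcont : ∀ m, Continuous (P m))
    (hweak : ∀ f : BoundedContinuousFunction Circle ℝ,
      Tendsto (fun m => ∫ z, f z * ‖P m z‖ ^ 2 ∂haarCircle) atTop
        (nhds (∫ z, f z ∂haarCircle)))
    (hQ1 : ∫ z in F, Q z ∂haarCircle ≤ 1)
    (hQP2 : ∀ m, ∫ z in F, Q z * ‖P m z‖ ^ 2 ∂haarCircle ≤ 1) :
    liminf (fun m => ∫ z in F, Q z * ‖P m z‖ ∂haarCircle) atTop ≤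
      (∫ z in F, Q z ∂haarCircle) -
        (1 / 8) * (limsup (fun m => ∫ z in F, Q z * |‖P m z‖ ^ 2 - 1| ∂haarCircle) atTop) ^ 2 := by
  have hFm : MeasurableSet F := hF.measurableSet
  have cN : ∀ m, Continuous fun z => ‖P m z‖ := fun m => (hPcont m).norm
  have intOn : ∀ {g : Circle → ℝ}, Continuous g → IntegrableOn g F haarCircle :=
    fun hg => (integrable_of_continuous hg).integrableOn
  set μ := haarCircle with hμdef
  set I1 := ∫ z in F, Q z ∂μ with hI1def
  set I2 : ℕ → ℝ := fun m => ∫ z in F, Q z * ‖P m z‖ ^ 2 ∂μ with hI2def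
  set A : ℕ → ℝ := fun m => ∫ z in F, Q z * ‖P m z‖ ∂μ with hAdef
  set C : ℕ → ℝ := fun m => ∫ z in F, Q z * |‖P m z‖ ^ 2 - 1| ∂μ with hCdef
  set D : ℕ → ℝ := fun m => ∫ z in F, Q z * (‖P m z‖ - 1) ^ 2 ∂μ with hDdef
  set E : ℕ → ℝ := fun m => ∫ z in F, Q z * (‖P m z‖ + 1) ^ 2 ∂μ with hEdef
  have hI2le : ∀ m, I2 m ≤ 1 := hQP2
  have hI1le : I1 ≤ 1 := hQ1
  -- nonnegativity
  have hI1nn : 0 ≤ I1 := setIntegral_nonneg hFm fun z _ => hQnonneg z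
  have hI2nn : ∀ m, 0 ≤ I2 m := fun m =>
    setIntegral_nonneg hFm fun z _ => mul_nonneg (hQnonneg z) (by positivity)
  have hAnn : ∀ m, 0 ≤ A m := fun m =>
    setIntegral_nonneg hFm fun z _ => mul_nonneg (hQnonneg z) (norm_nonneg _)
  have hCnn : ∀ m, 0 ≤ C m := fun m =>
    setIntegral_nonneg hFm fun z _ => mul_nonneg (hQnonneg z) (abs_nonneg _)
  have hDnn : ∀ m, 0 ≤ D m := fun m =>
    setIntegral_nonneg hFm fun z _ => mul_nonneg (hQnonneg z) (sq_nonneg _)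
  have hEnn : ∀ m, 0 ≤ E m := fun m =>
    setIntegral_nonneg hFm fun z _ => mul_nonneg (hQnonneg z) (sq_nonneg _)
  -- linear identities
  have hDeq : ∀ m, D m = I2 m - 2 * A m + I1 := by
    intro m
    show (∫ z in F, Q z * (‖P m z‖ - 1) ^ 2 ∂μ)
        = (∫ z in F, Q z * ‖P m z‖ ^ 2 ∂μ) - 2 * (∫ z in F, Q z * ‖P m z‖ ∂μ)
          + ∫ z in F, Q z ∂μ
    have h1 : (fun z => Q z * (‖P m z‖ - 1) ^ 2)
        = fun z => (Q z * ‖P m z‖ ^ 2 - 2 * (Q z * ‖P m z‖)) + Q z := by funext z; ring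
    rw [h1, integral_add (f := fun z => Q z * ‖P m z‖ ^ 2 - 2 * (Q z * ‖P m z‖)) (g := Q) (intOn ((hQcont.mul ((cN m).pow 2)).sub
        (continuous_const.mul (hQcont.mul (cN m))))) (intOn hQcont),
      integral_sub (f := fun z => Q z * ‖P m z‖ ^ 2) (g := fun z => 2 * (Q z * ‖P m z‖)) (intOn (hQcont.mul ((cN m).pow 2)))
        (intOn (continuous_const.mul (hQcont.mul (cN m)))),
      MeasureTheory.integral_const_mul]
  have hEeq : ∀ m, E m = I2 m + 2 * A m + I1 := by
    intro m
    show (∫ z in F, Q z * (‖P m z‖ + 1) ^ 2 ∂μ)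
        = (∫ z in F, Q z * ‖P m z‖ ^ 2 ∂μ) + 2 * (∫ z in F, Q z * ‖P m z‖ ∂μ)
          + ∫ z in F, Q z ∂μ
    have h1 : (fun z => Q z * (‖P m z‖ + 1) ^ 2)
        = fun z => (Q z * ‖P m z‖ ^ 2 + 2 * (Q z * ‖P m z‖)) + Q z := by funext z; ring
    rw [h1, integral_add (f := fun z => Q z * ‖P m z‖ ^ 2 + 2 * (Q z * ‖P m z‖)) (g := Q) (intOn ((hQcont.mul ((cN m).pow 2)).add
        (continuous_const.mul (hQcont.mul (cN m))))) (intOn hQcont),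
      integral_add (f := fun z => Q z * ‖P m z‖ ^ 2) (g := fun z => 2 * (Q z * ‖P m z‖)) (intOn (hQcont.mul ((cN m).pow 2)))
        (intOn (continuous_const.mul (hQcont.mul (cN m)))),
      MeasureTheory.integral_const_mul]
  have hAle : ∀ m, 2 * A m ≤ I1 + I2 m := fun m => by
    have h := hDnn m; rw [hDeq m] at h; linarith
  have hA1 : ∀ m, A m ≤ 1 := fun m => by linarith [hAle m, hI1le, hI2le m]
  have hEle : ∀ m, E m ≤ 4 := fun m => by
    rw [hEeq m]; linarith [hAle m, hI1le, hI2le m]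
  have hCle2 : ∀ m, C m ≤ 2 := by
    intro m
    have hpt : ∀ z, Q z * |‖P m z‖ ^ 2 - 1| ≤ Q z * ‖P m z‖ ^ 2 + Q z := by
      intro z
      have h1 : |‖P m z‖ ^ 2 - 1| ≤ ‖P m z‖ ^ 2 + 1 := by
        rw [abs_le]; constructor <;> nlinarith [sq_nonneg (‖P m z‖)]
      nlinarith [hQnonneg z]
    have h : C m ≤ ∫ z in F, (Q z * ‖P m z‖ ^ 2 + Q z) ∂μ :=
      setIntegral_mono (intOn (hQcont.mul ((((cN m).pow 2).sub continuous_const).abs)))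
        (intOn ((hQcont.mul ((cN m).pow 2)).add hQcont)) hpt
    rw [integral_add (f := fun z => Q z * ‖P m z‖ ^ 2) (g := Q) (intOn (hQcont.mul ((cN m).pow 2))) (intOn hQcont)] at h
    have e1 : ∫ z in F, Q z * ‖P m z‖ ^ 2 ∂μ = I2 m := rfl
    have e2 : ∫ z in F, Q z ∂μ = I1 := rfl
    rw [e1, e2] at h
    linarith [hI2le m, hI1le]
  -- Cauchy–Schwarz type estimate
  have hCS : ∀ m, C m ^ 2 ≤ 4 * D m := by
    intro m
    have key : ∀ t : ℝ, 0 < t → C m ≤ t / 2 * D m + 1 / (2 * t) * E m := by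
      intro t ht
      have hpt : ∀ z, Q z * |‖P m z‖ ^ 2 - 1|
          ≤ t / 2 * (Q z * (‖P m z‖ - 1) ^ 2) + 1 / (2 * t) * (Q z * (‖P m z‖ + 1) ^ 2) := by
        intro z
        have hs0 : 0 ≤ ‖P m z‖ := norm_nonneg _
        set s := ‖P m z‖ with hs
        have habs : |s ^ 2 - 1| = |s - 1| * (s + 1) := by
          rw [show s ^ 2 - 1 = (s - 1) * (s + 1) by ring, abs_mul,
            abs_of_nonneg (by linarith : (0:ℝ) ≤ s + 1)]
        have hAMGM : |s - 1| * (s + 1) ≤ t / 2 * (s - 1) ^ 2 + 1 / (2 * t) * (s + 1) ^ 2 := by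
          have hineq : 2 * t * (|s - 1| * (s + 1)) ≤ t ^ 2 * (s - 1) ^ 2 + (s + 1) ^ 2 := by
            nlinarith [sq_nonneg (t * |s - 1| - (s + 1)), sq_abs (s - 1)]
          have h2t : (0:ℝ) < 2 * t := by linarith
          calc |s - 1| * (s + 1) = 2 * t * (|s - 1| * (s + 1)) / (2 * t) := by field_simp
            _ ≤ (t ^ 2 * (s - 1) ^ 2 + (s + 1) ^ 2) / (2 * t) := by gcongr
            _ = t / 2 * (s - 1) ^ 2 + 1 / (2 * t) * (s + 1) ^ 2 := by field_simp
        calc Q z * |s ^ 2 - 1| = Q z * (|s - 1| * (s + 1)) := by rw [habs]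
          _ ≤ Q z * (t / 2 * (s - 1) ^ 2 + 1 / (2 * t) * (s + 1) ^ 2) :=
            mul_le_mul_of_nonneg_left hAMGM (hQnonneg z)
          _ = t / 2 * (Q z * (s - 1) ^ 2) + 1 / (2 * t) * (Q z * (s + 1) ^ 2) := by ring
      have c1 : Continuous fun z => Q z * (‖P m z‖ - 1) ^ 2 :=
        hQcont.mul (((cN m).sub continuous_const).pow 2)
      have c2 : Continuous fun z => Q z * (‖P m z‖ + 1) ^ 2 :=
        hQcont.mul (((cN m).add continuous_const).pow 2)
      have h : C m ≤ ∫ z in F,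
          (t / 2 * (Q z * (‖P m z‖ - 1) ^ 2) + 1 / (2 * t) * (Q z * (‖P m z‖ + 1) ^ 2)) ∂μ :=
        setIntegral_mono (intOn (hQcont.mul ((((cN m).pow 2).sub continuous_const).abs)))
          (intOn ((continuous_const.mul c1).add (continuous_const.mul c2))) hpt
      rw [integral_add (f := fun z => t / 2 * (Q z * (‖P m z‖ - 1) ^ 2)) (g := fun z => 1 / (2 * t) * (Q z * (‖P m z‖ + 1) ^ 2)) (intOn (continuous_const.mul c1)) (intOn (continuous_const.mul c2)),
        MeasureTheory.integral_const_mul, MeasureTheory.integral_const_mul] at h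
      have e1 : ∫ z in F, Q z * (‖P m z‖ - 1) ^ 2 ∂μ = D m := rfl
      have e2 : ∫ z in F, Q z * (‖P m z‖ + 1) ^ 2 ∂μ = E m := rfl
      rw [e1, e2] at h
      exact h
    refine le_of_forall_pos_le_add fun ε hε => ?_
    have hDε : 0 < D m + ε / 4 := by linarith [hDnn m]
    have hr : 0 < Real.sqrt (D m + ε / 4) := Real.sqrt_pos.2 hDε
    set r := Real.sqrt (D m + ε / 4) with hrdef
    have hr2 : r ^ 2 = D m + ε / 4 := Real.sq_sqrt hDε.le
    have hk := key (2 / r) (by positivity)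
    have hrne : r ≠ 0 := ne_of_gt hr
    have e1 : (2 / r) / 2 * D m = D m / r := by field_simp
    have e2 : 1 / (2 * (2 / r)) * E m = r * E m / 4 := by
      rw [show 2 * (2 / r) = 4 / r by ring, one_div_div]; ring
    rw [e1, e2] at hk
    have hDle : D m ≤ r ^ 2 := by rw [hr2]; linarith
    have b1 : D m / r ≤ r := by rw [div_le_iff₀ hr]; nlinarith
    have b2 : r * E m / 4 ≤ r := by
      rw [div_le_iff₀ (by norm_num : (0:ℝ) < 4)]
      nlinarith [hEle m, hEnn m, hr.le]
    have hC2r : C m ≤ 2 * r := by linarith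
    nlinarith [hCnn m, hC2r, hr2]
  have hkey : ∀ m, A m ≤ (I1 + I2 m) / 2 + -(C m ^ 2 / 8) := fun m => by
    have h1 := hCS m; have h2 := hDeq m; linarith
  -- portmanteau: limsup I2 ≤ I1
  have hport : limsup I2 atTop ≤ I1 := by
    have δpos : ∀ k : ℕ, (0:ℝ) < 1 / (k + 1) := fun k => by positivity
    set g : ℕ → Circle → ℝ :=
      fun k z => Q z * ((thickenedIndicator (δpos k) F z : ℝ≥0) : ℝ) with hgdef
    have gcont : ∀ k, Continuous (g k) := fun k =>
      hQcont.mul (NNReal.continuous_coe.comp (thickenedIndicator (δpos k) F).continuous)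
    have gnonneg : ∀ k z, 0 ≤ g k z := fun k z =>
      mul_nonneg (hQnonneg z) (NNReal.coe_nonneg _)
    have gle : ∀ k z, g k z ≤ Q z := fun k z => by
      have h1 : ((thickenedIndicator (δpos k) F z : ℝ≥0) : ℝ) ≤ 1 := by
        exact_mod_cast thickenedIndicator_le_one (δpos k) F z
      exact mul_le_of_le_one_right (hQnonneg z) h1
    have step1 : ∀ k m, I2 m ≤ ∫ z, g k z * ‖P m z‖ ^ 2 ∂μ := by
      intro k m
      have e1 : I2 m = ∫ z, F.indicator (fun z => Q z * ‖P m z‖ ^ 2) z ∂μ :=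
        (integral_indicator hFm).symm
      rw [e1]
      apply integral_mono
      · exact (intOn (hQcont.mul ((cN m).pow 2))).integrable_indicator hFm
      · exact integrable_of_continuous ((gcont k).mul ((cN m).pow 2))
      · intro z
        show F.indicator (fun z => Q z * ‖P m z‖ ^ 2) z ≤ g k z * ‖P m z‖ ^ 2
        by_cases hz : z ∈ F
        · have h1 : thickenedIndicator (δpos k) F z = 1 :=
            thickenedIndicator_one (δpos k) F hz
          have h2 : g k z = Q z := by
            show Q z * ((thickenedIndicator (δpos k) F z : ℝ≥0) : ℝ) = Q z
            rw [h1]; norm_num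
          rw [Set.indicator_of_mem hz, h2]
        · simp only [Set.indicator_of_notMem hz]
          exact mul_nonneg (gnonneg k z) (by positivity)
    have step2 : ∀ k, limsup I2 atTop ≤ ∫ z, g k z ∂μ := by
      intro k
      have hw := hweak (BoundedContinuousFunction.mkOfCompact ⟨g k, gcont k⟩)
      simp only [BoundedContinuousFunction.mkOfCompact_apply, ContinuousMap.coe_mk] at hw
      have h1 : limsup I2 atTop ≤ limsup (fun m => ∫ z, g k z * ‖P m z‖ ^ 2 ∂μ) atTop :=
        limsup_le_limsup (Eventually.of_forall (step1 k))
          ((isBoundedUnder_of ⟨0, hI2nn⟩).isCoboundedUnder_le)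
          hw.isBoundedUnder_le
      rw [hw.limsup_eq] at h1
      exact h1
    have step3 : Tendsto (fun k => ∫ z, g k z ∂μ) atTop (𝓝 I1) := by
      have e1 : I1 = ∫ z, F.indicator Q z ∂μ := (integral_indicator hFm).symm
      rw [e1]
      apply tendsto_integral_of_dominated_convergence Q
        (fun k => (gcont k).aestronglyMeasurable) (integrable_of_continuous hQcont)
      · intro k
        apply Eventually.of_forall; intro z
        rw [Real.norm_eq_abs, abs_of_nonneg (gnonneg k z)]
        exact gle k z
      · apply Eventually.of_forall; intro z
        have hth := thickenedIndicator_tendsto_indicator_closure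
          (δseq := fun k : ℕ => 1 / (k + 1)) δpos
          tendsto_one_div_add_atTop_nhds_zero_nat F
        rw [tendsto_pi_nhds] at hth
        have hth2 := ((NNReal.continuous_coe.tendsto _).comp (hth z)).const_mul (Q z)
        rw [hF.closure_eq] at hth2
        have e2 : F.indicator Q z
            = Q z * ((F.indicator (fun _ => (1:ℝ≥0)) z : ℝ≥0) : ℝ) := by
          by_cases hz : z ∈ F <;> simp [hz]
        rw [e2]
        exact hth2
    exact ge_of_tendsto' step3 step2
  -- final assembly
  have hCbddAbove : IsBoundedUnder (· ≤ ·) atTop C := isBoundedUnder_of ⟨2, hCle2⟩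
  have hCbddBelow : IsBoundedUnder (· ≥ ·) atTop C := isBoundedUnder_of ⟨0, hCnn⟩
  set L := limsup C atTop with hLdef
  have hL0 : 0 ≤ L := le_limsup_of_frequently_le (Frequently.of_forall hCnn) hCbddAbove
  have hant : Antitone fun x : ℝ => -(max x 0 ^ 2 / 8) := by
    intro x y hxy
    have h1 : max x 0 ≤ max y 0 := max_le_max hxy le_rfl
    have h2 : 0 ≤ max x 0 := le_max_right x 0
    have h3 : max x 0 ^ 2 ≤ max y 0 ^ 2 := by nlinarith
    simp only [neg_le_neg_iff]
    linarith
  have hcontat : ContinuousAt (fun x : ℝ => -(max x 0 ^ 2 / 8)) L :=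
    (Continuous.neg (((continuous_id.max continuous_const).pow 2).div_const 8)).continuousAt
  have hmap := hant.map_limsup_of_continuousAt C hcontat hCbddAbove
    hCbddBelow.isCoboundedUnder_le
  have hcomp : ((fun x : ℝ => -(max x 0 ^ 2 / 8)) ∘ C) = fun m => -(C m ^ 2 / 8) := by
    funext m; simp [Function.comp, max_eq_left (hCnn m)]
  rw [hcomp] at hmap
  have hmapL : -(L ^ 2 / 8) = liminf (fun m => -(C m ^ 2 / 8)) atTop := by
    rw [← hmap, max_eq_left hL0]
  -- limsup of the first part
  have hI2bddAbove : IsBoundedUnder (· ≤ ·) atTop I2 := isBoundedUnder_of ⟨1, hI2le⟩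
  have hI2bddBelow : IsBoundedUnder (· ≥ ·) atTop I2 := isBoundedUnder_of ⟨0, hI2nn⟩
  have hmono : Monotone fun x : ℝ => (I1 + x) / 2 := fun x y h => by dsimp; linarith
  have hmap2 := hmono.map_limsup_of_continuousAt I2
    (((continuous_const.add continuous_id).div_const 2).continuousAt) hI2bddAbove hI2bddBelow.isCoboundedUnder_le
  have hcomp2 : ((fun x : ℝ => (I1 + x) / 2) ∘ I2) = fun m => (I1 + I2 m) / 2 := rfl
  rw [hcomp2] at hmap2
  have hlimsupU : limsup (fun m => (I1 + I2 m) / 2) atTop ≤ I1 := by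
    rw [← hmap2]; linarith [hport]
  -- bounds for the split
  have hUbddBelow : IsBoundedUnder (· ≥ ·) atTop (fun m => (I1 + I2 m) / 2) :=
    isBoundedUnder_of ⟨0, fun m => by linarith [hI1nn, hI2nn m]⟩
  have hUbddAbove : IsBoundedUnder (· ≤ ·) atTop (fun m => (I1 + I2 m) / 2) :=
    isBoundedUnder_of ⟨1, fun m => by linarith [hI1le, hI2le m]⟩
  have hVbddBelow : IsBoundedUnder (· ≥ ·) atTop (fun m => -(C m ^ 2 / 8)) :=
    isBoundedUnder_of ⟨-(1:ℝ)/2, fun m => by nlinarith [hCle2 m, hCnn m]⟩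
  have hVbddAbove : IsBoundedUnder (· ≤ ·) atTop (fun m => -(C m ^ 2 / 8)) :=
    isBoundedUnder_of ⟨0, fun m => by nlinarith [hCnn m]⟩
  have hsplit := liminf_add_le (f := atTop) (u := fun m => (I1 + I2 m) / 2)
    (v := fun m => -(C m ^ 2 / 8)) hUbddBelow hUbddAbove hVbddBelow
    hVbddAbove.isCoboundedUnder_ge
  have hsum : ((fun m => (I1 + I2 m) / 2) + fun m => -(C m ^ 2 / 8))
      = fun m => (I1 + I2 m) / 2 + -(C m ^ 2 / 8) := rfl
  rw [hsum] at hsplit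
  have hliminf1 : liminf A atTop ≤ liminf (fun m => (I1 + I2 m) / 2 + -(C m ^ 2 / 8)) atTop :=
    liminf_le_liminf (Eventually.of_forall hkey)
      (isBoundedUnder_of ⟨0, hAnn⟩)
      ((isBoundedUnder_of
        ⟨1, fun m => by nlinarith [hI1le, hI2le m, hCnn m]⟩).isCoboundedUnder_ge)
  calc liminf A atTop
      ≤ limsup (fun m => (I1 + I2 m) / 2) atTop + liminf (fun m => -(C m ^ 2 / 8)) atTop :=
        hliminf1.trans hsplit
    _ ≤ I1 + -(L ^ 2 / 8) := by rw [← hmapL]; linarith [hlimsupU]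
    _ ≤ I1 - 1 / 8 * L ^ 2 := by linarith
end
end

section
/- There exists an absolute constant K > 0 such that for every n ≥ 1 and all complex numbers c, (b_p)_{1≤p≤n}, (a_{pq})_{1≤p<q≤n}, if ε = (ε_1,…,ε_n) is uniformly distributed on {−1,1}^n and f(ε) = c + Σ_p b_p ε_p + Σ_{p<q} a_{pq} ε_p ε_q, then (E|f(ε)|²)^{1/2} ≤ K · E|f(ε)|. -/
open Finset

noncomputable def rad (b : Bool) : ℂ := if b then 1 else -1

def IsChaos : ℕ → (n : ℕ) → ((Fin n → Bool) → ℂ) → Prop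
  | 0, _, F => ∃ c, ∀ y, F y = c
  | _+1, 0, _ => True
  | d+1, n+1, F => ∃ G H, IsChaos (d+1) n G ∧ IsChaos d n H ∧
      ∀ y, F y = G (fun i => y i.succ) + rad (y 0) * H (fun i => y i.succ)

lemma chaos_const (n : ℕ) (c : ℂ) : IsChaos 0 n (fun _ => c) := by
  cases n <;> exact ⟨c, fun _ => rfl⟩

lemma chaos_zero : ∀ (n d : ℕ), IsChaos d n (fun _ => 0) := by
  intro n
  induction n with
  | zero => intro d; cases d with
    | zero => exact ⟨0, fun _ => rfl⟩
    | succ d => trivial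
  | succ n ih => intro d; cases d with
    | zero => exact ⟨0, fun _ => rfl⟩
    | succ d => exact ⟨(fun _ => 0), (fun _ => 0), ih _, ih _, by intro y; simp⟩

lemma chaos_add : ∀ (n d : ℕ) (F F' : (Fin n → Bool) → ℂ),
    IsChaos d n F → IsChaos d n F' → IsChaos d n (fun y => F y + F' y) := by
  intro n
  induction n with
  | zero => intro d F F' h h'; cases d with
    | zero =>
      obtain ⟨c, hc⟩ := h; obtain ⟨c', hc'⟩ := h'
      exact ⟨c + c', fun y => by show F y + F' y = c + c'; rw [hc, hc']⟩
    | succ d => trivial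
  | succ n ih => intro d F F' h h'; cases d with
    | zero =>
      obtain ⟨c, hc⟩ := h; obtain ⟨c', hc'⟩ := h'
      exact ⟨c + c', fun y => by show F y + F' y = c + c'; rw [hc, hc']⟩
    | succ d =>
      obtain ⟨G, H, hG, hH, heq⟩ := h
      obtain ⟨G', H', hG', hH', heq'⟩ := h'
      refine ⟨fun x => G x + G' x, fun x => H x + H' x, ih _ _ _ hG hG', ih _ _ _ hH hH', ?_⟩
      intro y; show F y + F' y = _; rw [heq, heq']; ring

lemma chaos_mono : ∀ (n d : ℕ) (F : (Fin n → Bool) → ℂ),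
    IsChaos d n F → IsChaos (d+1) n F := by
  intro n
  induction n with
  | zero => intro d F _; trivial
  | succ n ih => intro d F h; cases d with
    | zero =>
      obtain ⟨c, hc⟩ := h
      refine ⟨fun _ => c, fun _ => 0, ih 0 _ (chaos_const n c), chaos_zero n 0, ?_⟩
      intro y; rw [hc]; ring
    | succ d =>
      obtain ⟨G, H, hG, hH, heq⟩ := h
      exact ⟨G, H, ih _ _ hG, ih _ _ hH, heq⟩

lemma chaos_le {n d d' : ℕ} {F : (Fin n → Bool) → ℂ} (hd : d ≤ d')
    (h : IsChaos d n F) : IsChaos d' n F := by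
  induction hd with
  | refl => exact h
  | step _ ih => exact chaos_mono _ _ _ ih

lemma chaos_linear : ∀ (n : ℕ) (bb : ℂ) (p : Fin n),
    IsChaos 1 n (fun y => bb * rad (y p)) := by
  intro n
  induction n with
  | zero => intro bb p; exact p.elim0
  | succ n ih =>
    intro bb p
    refine Fin.cases ?_ ?_ p
    · refine ⟨fun _ => 0, fun _ => bb, chaos_zero n 1, chaos_const n bb, ?_⟩
      intro y; ring
    · intro i
      refine ⟨fun x => bb * rad (x i), fun _ => 0, ih bb i, chaos_const n 0, ?_⟩
      intro y; ring

lemma chaos_quad : ∀ (n : ℕ) (aa : ℂ) (p q : Fin n), p ≠ q →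
    IsChaos 2 n (fun y => aa * rad (y p) * rad (y q)) := by
  intro n
  induction n with
  | zero => intro _ p _ _; exact p.elim0
  | succ n ih =>
    intro aa p q hpq
    rcases Fin.eq_zero_or_eq_succ p with rfl | ⟨i, rfl⟩ <;>
      rcases Fin.eq_zero_or_eq_succ q with rfl | ⟨j, rfl⟩
    · exact absurd rfl hpq
    · refine ⟨fun _ => 0, fun x => aa * rad (x j), chaos_zero n 2,
        chaos_linear n aa j, ?_⟩
      intro y
      show aa * rad (y 0) * rad (y j.succ) = 0 + rad (y 0) * (aa * rad (y j.succ))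
      ring
    · refine ⟨fun _ => 0, fun x => aa * rad (x i), chaos_zero n 2,
        chaos_linear n aa i, ?_⟩
      intro y
      show aa * rad (y i.succ) * rad (y 0) = 0 + rad (y 0) * (aa * rad (y i.succ))
      ring
    · have hij : i ≠ j := fun h => hpq (by rw [h])
      refine ⟨fun x => aa * rad (x i) * rad (x j), fun _ => 0,
        ih aa i j hij, chaos_zero n 1, ?_⟩
      intro y
      show aa * rad (y i.succ) * rad (y j.succ)
        = aa * rad (y i.succ) * rad (y j.succ) + rad (y 0) * 0
      ring

lemma chaos_sum {ι : Type*} (n d : ℕ) (s : Finset ι) (F : ι → (Fin n → Bool) → ℂ)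
    (h : ∀ i ∈ s, IsChaos d n (F i)) :
    IsChaos d n (fun y => ∑ i ∈ s, F i y) := by
  induction s using Finset.cons_induction with
  | empty => simpa using chaos_le (Nat.zero_le d) (chaos_const n 0)
  | cons j t hj iht =>
    have : IsChaos d n (fun y => F j y + ∑ i ∈ t, F i y) :=
      chaos_add n d _ _ (h j (mem_cons_self j t)) (iht fun i hi => h i (mem_cons.2 (Or.inr hi)))
    simpa [Finset.sum_cons] using this

lemma key2 (a b : ℂ) : ‖a + b‖ ^ 2 + ‖a - b‖ ^ 2 = 2 * (‖a‖ ^ 2 + ‖b‖ ^ 2) := by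
  simp only [Complex.sq_norm, Complex.normSq_apply,
    Complex.add_re, Complex.add_im, Complex.sub_re, Complex.sub_im]
  ring

lemma key4 (a b : ℂ) :
    ‖a + b‖ ^ 4 + ‖a - b‖ ^ 4 ≤ 2 * (‖a‖ ^ 4 + 6 * (‖a‖ ^ 2 * ‖b‖ ^ 2) + ‖b‖ ^ 4) := by
  have h1 : ‖a + b‖ ^ 4 = (‖a + b‖ ^ 2) ^ 2 := by ring
  have h2 : ‖a - b‖ ^ 4 = (‖a - b‖ ^ 2) ^ 2 := by ring
  have h3 : ‖a‖ ^ 4 = (‖a‖ ^ 2) ^ 2 := by ring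
  have h4 : ‖b‖ ^ 4 = (‖b‖ ^ 2) ^ 2 := by ring
  rw [h1, h2, h3, h4]
  simp only [Complex.sq_norm, Complex.normSq_apply,
    Complex.add_re, Complex.add_im, Complex.sub_re, Complex.sub_im]
  nlinarith [sq_nonneg (a.re * b.im - a.im * b.re), sq_nonneg (a.re * b.re + a.im * b.im)]

lemma sum_split (n : ℕ) (φ : (Fin (n + 1) → Bool) → ℝ) :
    ∑ y : Fin (n + 1) → Bool, φ y
      = ∑ x : Fin n → Bool, (φ (Fin.cons true x) + φ (Fin.cons false x)) := by
  rw [← Equiv.sum_comp (Fin.consEquiv fun _ => Bool) φ, Fintype.sum_prod_type,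
    Fintype.sum_bool]
  rw [← Finset.sum_add_distrib]
  rfl

lemma final_arith (p2 p9 S A B M P Q : ℝ) (h2pos : 0 < p2) (h9pos : 0 < p9)
    (hPpos : 0 ≤ P) (hQpos : 0 ≤ Q)
    (ihG : p2 * A ≤ p9 * 9 * P ^ 2) (ihH : p2 * B ≤ p9 * Q ^ 2)
    (hcross : p2 * M ≤ 3 * p9 * (P * Q))
    (hfin : p2 * S ≤ p2 * (2 * (A + 6 * M + B))) :
    p2 * 2 * S ≤ p9 * 9 * (2 * (P + Q)) ^ 2 := by
  nlinarith [mul_nonneg (le_of_lt h9pos) (sq_nonneg Q),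
    mul_nonneg (le_of_lt h9pos) (mul_nonneg hPpos hQpos)]

lemma chaos_L4 : ∀ (n d : ℕ) (F : (Fin n → Bool) → ℂ), IsChaos d n F →
    2 ^ n * ∑ y : Fin n → Bool, ‖F y‖ ^ 4
      ≤ 9 ^ d * (∑ y : Fin n → Bool, ‖F y‖ ^ 2) ^ 2 := by
  intro n
  induction n with
  | zero =>
    intro d F _
    rw [Fintype.sum_unique (fun y : Fin 0 → Bool => ‖F y‖ ^ 4),
      Fintype.sum_unique (fun y : Fin 0 → Bool => ‖F y‖ ^ 2)]
    have h9 : (1 : ℝ) ≤ 9 ^ d := one_le_pow₀ (by norm_num)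
    have hn : (0 : ℝ) ≤ ‖F default‖ := norm_nonneg _
    rw [pow_zero, one_mul]
    nlinarith [sq_nonneg (‖F default‖ ^ 2)]
  | succ n ih =>
    intro d F h
    match d with
    | 0 =>
      obtain ⟨c, hc⟩ := h
      simp only [hc, Finset.sum_const, Finset.card_univ, nsmul_eq_mul]
      have hcard : (Fintype.card (Fin (n + 1) → Bool) : ℝ) = 2 ^ (n + 1) := by
        rw [Fintype.card_fun]; push_cast; simp
      rw [hcard, pow_zero, one_mul]
      nlinarith [sq_nonneg (‖c‖ ^ 2), pow_pos (show (0:ℝ) < 2 by norm_num) (n+1)]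
    | d + 1 =>
      obtain ⟨G, H, hG, hH, heq⟩ := h
      have hcons : ∀ (bb : Bool) (x : Fin n → Bool),
          F (Fin.cons bb x) = G x + rad bb * H x := by
        intro bb x
        rw [heq]
        simp only [Fin.cons_succ, Fin.cons_zero]
      set A := ∑ x : Fin n → Bool, ‖G x‖ ^ 4 with hA
      set B := ∑ x : Fin n → Bool, ‖H x‖ ^ 4 with hB
      set M := ∑ x : Fin n → Bool, ‖G x‖ ^ 2 * ‖H x‖ ^ 2 with hM
      set P := ∑ x : Fin n → Bool, ‖G x‖ ^ 2 with hP
      set Q := ∑ x : Fin n → Bool, ‖H x‖ ^ 2 with hQ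
      have hs4 : ∑ y : Fin (n + 1) → Bool, ‖F y‖ ^ 4
          = ∑ x : Fin n → Bool, (‖G x + H x‖ ^ 4 + ‖G x - H x‖ ^ 4) := by
        rw [sum_split n (fun y => ‖F y‖ ^ 4)]
        refine Finset.sum_congr rfl fun x _ => ?_
        rw [hcons, hcons]
        simp [rad, sub_eq_add_neg]
      have hs2 : ∑ y : Fin (n + 1) → Bool, ‖F y‖ ^ 2 = 2 * (P + Q) := by
        rw [sum_split n (fun y => ‖F y‖ ^ 2)]
        have : ∀ x : Fin n → Bool,
            ‖F (Fin.cons true x)‖ ^ 2 + ‖F (Fin.cons false x)‖ ^ 2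
              = 2 * (‖G x‖ ^ 2 + ‖H x‖ ^ 2) := by
          intro x
          rw [hcons, hcons]
          simpa [rad, sub_eq_add_neg] using key2 (G x) (H x)
        rw [Finset.sum_congr rfl fun x _ => this x]
        rw [← Finset.mul_sum, Finset.sum_add_distrib]
      have hs4le : ∑ x : Fin n → Bool, (‖G x + H x‖ ^ 4 + ‖G x - H x‖ ^ 4)
          ≤ 2 * (A + 6 * M + B) := by
        calc ∑ x : Fin n → Bool, (‖G x + H x‖ ^ 4 + ‖G x - H x‖ ^ 4)
            ≤ ∑ x : Fin n → Bool,
              2 * (‖G x‖ ^ 4 + 6 * (‖G x‖ ^ 2 * ‖H x‖ ^ 2) + ‖H x‖ ^ 4) :=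
              Finset.sum_le_sum fun x _ => key4 (G x) (H x)
          _ = 2 * (A + 6 * M + B) := by
              rw [← Finset.mul_sum, hA, hM, hB]
              congr 1
              rw [Finset.sum_add_distrib, Finset.sum_add_distrib, ← Finset.mul_sum]
      have hMsq : M ^ 2 ≤ A * B := by
        have hcs := Finset.sum_mul_sq_le_sq_mul_sq Finset.univ
          (fun x : Fin n → Bool => ‖G x‖ ^ 2) (fun x : Fin n → Bool => ‖H x‖ ^ 2)
        have e : ∀ r : ℝ, (r ^ 2) ^ 2 = r ^ 4 := fun r => by ring
        simpa [e] using hcs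
      have hApos : 0 ≤ A := Finset.sum_nonneg fun x _ => by positivity
      have hBpos : 0 ≤ B := Finset.sum_nonneg fun x _ => by positivity
      have hMpos : 0 ≤ M := Finset.sum_nonneg fun x _ => by positivity
      have hPpos : 0 ≤ P := Finset.sum_nonneg fun x _ => by positivity
      have hQpos : 0 ≤ Q := Finset.sum_nonneg fun x _ => by positivity
      have ihG := ih (d + 1) G hG
      have ihH := ih d H hH
      have h2pos : (0 : ℝ) < 2 ^ n := by positivity
      have h9pos : (0 : ℝ) < 9 ^ d := by positivity
      have hcross : 2 ^ n * M ≤ 3 * 9 ^ d * (P * Q) := by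
        have hsq : (2 ^ n * M) ^ 2 ≤ (3 * 9 ^ d * (P * Q)) ^ 2 := by
          have h1 : (2 ^ n * M) ^ 2 ≤ (2 ^ n * A) * (2 ^ n * B) := by
            have : (2:ℝ) ^ n * M ^ 2 ≤ 2 ^ n * (A * B) :=
              mul_le_mul_of_nonneg_left hMsq (le_of_lt h2pos)
            nlinarith
          have h2 : (2 ^ n * A) * (2 ^ n * B) ≤ (9 ^ (d+1) * P ^ 2) * (9 ^ d * Q ^ 2) := by
            apply mul_le_mul ihG ihH (by positivity) (by positivity)
          calc (2 ^ n * M) ^ 2 ≤ (9 ^ (d+1) * P ^ 2) * (9 ^ d * Q ^ 2) := le_trans h1 h2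
            _ = (3 * 9 ^ d * (P * Q)) ^ 2 := by rw [pow_succ]; ring
        have hXpos : (0:ℝ) ≤ 2 ^ n * M := mul_nonneg (le_of_lt h2pos) hMpos
        have hYpos : (0:ℝ) ≤ 3 * 9 ^ d * (P * Q) := mul_nonneg (mul_nonneg (by norm_num) (le_of_lt h9pos)) (mul_nonneg hPpos hQpos)
        exact (pow_le_pow_iff_left₀ hXpos hYpos two_ne_zero).mp hsq
      rw [hs4, hs2, pow_succ, pow_succ]
      rw [pow_succ] at ihG
      have hfin : (2:ℝ) ^ n * (∑ x : Fin n → Bool, (‖G x + H x‖ ^ 4 + ‖G x - H x‖ ^ 4))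
          ≤ 2 ^ n * (2 * (A + 6 * M + B)) :=
        mul_le_mul_of_nonneg_left hs4le (le_of_lt h2pos)
      exact final_arith (2 ^ n) (9 ^ d) _ A B M P Q h2pos h9pos hPpos hQpos ihG ihH hcross hfin

set_option maxHeartbeats 1000000 in
/-- **Khintchine–Bonami inequality** for Rademacher chaos of degree at most 2.
There exists an absolute constant `K > 0` such that for every `n ≥ 1` and all complex
numbers `c`, `(b_p)`, `(a_{pq})_{p<q}`, if `ε` is uniformly distributed on `{−1,1}ⁿ` and
`f(ε) = c + Σ_p b_p ε_p + Σ_{p<q} a_{pq} ε_p ε_q`, then `(E |f(ε)|²)^{1/2} ≤ K • E |f(ε)|`.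
Here the expectation is the average over all `2ⁿ` sign vectors. -/
theorem stmt3 :
    ∃ K : ℝ, 0 < K ∧
      ∀ (n : ℕ), 1 ≤ n → ∀ (c : ℂ) (b : Fin n → ℂ) (a : Fin n → Fin n → ℂ),
        ∀ f : (Fin n → ℝ) → ℂ,
          (∀ ε : Fin n → ℝ,
            f ε = c + (∑ p : Fin n, b p * (ε p : ℂ)) +
              ∑ pq ∈ Finset.univ.filter (fun pq : Fin n × Fin n => pq.1 < pq.2),
                a pq.1 pq.2 * (ε pq.1 : ℂ) * (ε pq.2 : ℂ)) →
          Real.sqrt ((1 / 2 ^ n) *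
              ∑ s : Fin n → Bool, ‖f (fun p => if s p then 1 else -1)‖ ^ 2) ≤
            K * ((1 / 2 ^ n) *
              ∑ s : Fin n → Bool, ‖f (fun p => if s p then 1 else -1)‖) := by
  refine ⟨9, by norm_num, ?_⟩
  intro n _ c b a f hf
  set F : (Fin n → Bool) → ℂ := fun s => f (fun p => if s p then 1 else -1) with hFdef
  have hF : ∀ y : Fin n → Bool,
      F y = (c + ∑ p : Fin n, b p * rad (y p)) +
        ∑ pq ∈ Finset.univ.filter (fun pq : Fin n × Fin n => pq.1 < pq.2),
          a pq.1 pq.2 * rad (y pq.1) * rad (y pq.2) := by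
    intro y
    have hc : ∀ p : Fin n, (((if y p then (1:ℝ) else -1) : ℝ) : ℂ) = rad (y p) := by
      intro p; by_cases h : y p <;> simp [rad, h]
    rw [hFdef]
    simp only [hf (fun p => if y p then 1 else -1), hc, add_assoc]
  have hchaos : IsChaos 2 n F := by
    have h1 : IsChaos 2 n (fun y : Fin n → Bool => c + ∑ p : Fin n, b p * rad (y p)) := by
      have hc2 : IsChaos 2 n (fun _ : Fin n → Bool => c) :=
        chaos_le (Nat.zero_le 2) (chaos_const n c)
      have hl : IsChaos 1 n (fun y : Fin n → Bool => ∑ p : Fin n, b p * rad (y p)) :=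
        chaos_sum n 1 Finset.univ (fun p y => b p * rad (y p))
          (fun p _ => chaos_linear n (b p) p)
      exact chaos_add n 2 _ _ hc2 (chaos_le (by norm_num) hl)
    have h2 : IsChaos 2 n (fun y : Fin n → Bool =>
        ∑ pq ∈ Finset.univ.filter (fun pq : Fin n × Fin n => pq.1 < pq.2),
          a pq.1 pq.2 * rad (y pq.1) * rad (y pq.2)) :=
      chaos_sum n 2 _ (fun (pq : Fin n × Fin n) (y : Fin n → Bool) => a pq.1 pq.2 * rad (y pq.1) * rad (y pq.2))
        (fun pq hpq => chaos_quad n _ _ _ (ne_of_lt (Finset.mem_filter.1 hpq).2))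
    have h3 := chaos_add n 2 _ _ h1 h2
    have hfe : F = fun y : Fin n → Bool =>
        (c + ∑ p : Fin n, b p * rad (y p)) +
          ∑ pq ∈ Finset.univ.filter (fun pq : Fin n × Fin n => pq.1 < pq.2),
            a pq.1 pq.2 * rad (y pq.1) * rad (y pq.2) := funext hF
    rw [hfe]
    exact h3
  set S1 := ∑ y : Fin n → Bool, ‖F y‖ with hS1
  set S2 := ∑ y : Fin n → Bool, ‖F y‖ ^ 2 with hS2
  set S3 := ∑ y : Fin n → Bool, ‖F y‖ ^ 3 with hS3
  set S4 := ∑ y : Fin n → Bool, ‖F y‖ ^ 4 with hS4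
  have hS1n : 0 ≤ S1 := Finset.sum_nonneg fun y _ => norm_nonneg _
  have hS2n : 0 ≤ S2 := Finset.sum_nonneg fun y _ => by positivity
  have hS3n : 0 ≤ S3 := Finset.sum_nonneg fun y _ => by positivity
  have hS4n : 0 ≤ S4 := Finset.sum_nonneg fun y _ => by positivity
  have hp : (0:ℝ) < 2 ^ n := by positivity
  have hL4 : 2 ^ n * S4 ≤ 81 * S2 ^ 2 := by
    have := chaos_L4 n 2 F hchaos
    norm_num at this
    exact this
  have hCS1 : S2 ^ 2 ≤ S1 * S3 := by
    have hcs := Finset.sum_mul_sq_le_sq_mul_sq Finset.univ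
      (fun y : Fin n → Bool => Real.sqrt ‖F y‖)
      (fun y : Fin n → Bool => Real.sqrt ‖F y‖ * ‖F y‖)
    have e1 : ∀ y : Fin n → Bool,
        Real.sqrt ‖F y‖ * (Real.sqrt ‖F y‖ * ‖F y‖) = ‖F y‖ ^ 2 := by
      intro y
      rw [← mul_assoc, Real.mul_self_sqrt (norm_nonneg _)]
      ring
    have e2 : ∀ y : Fin n → Bool, Real.sqrt ‖F y‖ ^ 2 = ‖F y‖ :=
      fun y => Real.sq_sqrt (norm_nonneg _)
    have e3 : ∀ y : Fin n → Bool,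
        (Real.sqrt ‖F y‖ * ‖F y‖) ^ 2 = ‖F y‖ ^ 3 := by
      intro y
      rw [mul_pow, Real.sq_sqrt (norm_nonneg _)]
      ring
    simp only [e1, e2, e3] at hcs
    exact hcs
  have hCS2 : S3 ^ 2 ≤ S2 * S4 := by
    have hcs := Finset.sum_mul_sq_le_sq_mul_sq Finset.univ
      (fun y : Fin n → Bool => ‖F y‖) (fun y : Fin n → Bool => ‖F y‖ ^ 2)
    have e1 : ∀ y : Fin n → Bool, ‖F y‖ * ‖F y‖ ^ 2 = ‖F y‖ ^ 3 := fun y => by ring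
    have e2 : ∀ y : Fin n → Bool, (‖F y‖ ^ 2) ^ 2 = ‖F y‖ ^ 4 := fun y => by ring
    simp only [e1, e2] at hcs
    exact hcs
  have key : (1 / 2 ^ n) * S2 ≤ (9 * ((1 / 2 ^ n) * S1)) ^ 2 := by
    rcases eq_or_lt_of_le hS2n with hz | hS2pos
    · rw [← hz, mul_zero]
      positivity
    · have hchain : 2 ^ n * S2 ^ 4 ≤ 81 * S1 ^ 2 * S2 ^ 3 := by
        have h1 : S2 ^ 4 ≤ S1 ^ 2 * S3 ^ 2 := by
          have := pow_le_pow_left₀ (sq_nonneg S2) hCS1 2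
          calc S2 ^ 4 = (S2 ^ 2) ^ 2 := by ring
            _ ≤ (S1 * S3) ^ 2 := this
            _ = S1 ^ 2 * S3 ^ 2 := by ring
        have h2 : S1 ^ 2 * S3 ^ 2 ≤ S1 ^ 2 * (S2 * S4) :=
          mul_le_mul_of_nonneg_left hCS2 (sq_nonneg S1)
        have h3 : 2 ^ n * S2 ^ 4 ≤ 2 ^ n * (S1 ^ 2 * (S2 * S4)) :=
          mul_le_mul_of_nonneg_left (le_trans h1 h2) (le_of_lt hp)
        have h4 : S1 ^ 2 * S2 * (2 ^ n * S4) ≤ S1 ^ 2 * S2 * (81 * S2 ^ 2) :=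
          mul_le_mul_of_nonneg_left hL4 (mul_nonneg (sq_nonneg S1) hS2n)
        calc 2 ^ n * S2 ^ 4 ≤ 2 ^ n * (S1 ^ 2 * (S2 * S4)) := h3
          _ = S1 ^ 2 * S2 * (2 ^ n * S4) := by ring
          _ ≤ S1 ^ 2 * S2 * (81 * S2 ^ 2) := h4
          _ = 81 * S1 ^ 2 * S2 ^ 3 := by ring
      have hcancel : 2 ^ n * S2 ≤ 81 * S1 ^ 2 := by
        have hS23 : (0:ℝ) < S2 ^ 3 := pow_pos hS2pos 3
        have : (2 ^ n * S2) * S2 ^ 3 ≤ (81 * S1 ^ 2) * S2 ^ 3 := by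
          calc (2 ^ n * S2) * S2 ^ 3 = 2 ^ n * S2 ^ 4 := by ring
            _ ≤ 81 * S1 ^ 2 * S2 ^ 3 := hchain
            _ = (81 * S1 ^ 2) * S2 ^ 3 := by ring
        exact le_of_mul_le_mul_right this hS23
      calc (1 / 2 ^ n) * S2 = (1 / 2 ^ n) ^ 2 * (2 ^ n * S2) := by
            field_simp
          _ ≤ (1 / 2 ^ n) ^ 2 * (81 * S1 ^ 2) :=
            mul_le_mul_of_nonneg_left hcancel (by positivity)
          _ = (9 * ((1 / 2 ^ n) * S1)) ^ 2 := by ring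
  have hfinal := Real.sqrt_le_sqrt key
  rwa [Real.sqrt_sq (by positivity)] at hfinal
end

section
/- Let c : ℤ → ℝ satisfy c_n ≥ 0 for all n and Σ_{n∈ℤ} c_n ≤ 1, and define the continuous function φ on the unit circle by φ(z) = Σ_{n∈ℤ} c_n z^n. Then the level set {z ∈ 𝕋 : φ(z) = 1} is either the whole circle 𝕋 or a finite set (contained in a finite subgroup of 𝕋). -/
/-- For `k ≠ 0`, the `k`-th roots of unity on the circle form a finite set. -/
lemma circle_pow_finite (k : ℕ) (hk : k ≠ 0) :
    {z : Circle | (z : ℂ) ^ k = 1}.Finite := by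
  have hC : {w : ℂ | w ^ k = 1}.Finite := by
    have hp : (Polynomial.X ^ k - Polynomial.C 1 : Polynomial ℂ) ≠ 0 :=
      Polynomial.X_pow_sub_C_ne_zero (Nat.pos_of_ne_zero hk) 1
    refine (Polynomial.finite_setOf_isRoot hp).subset ?_
    intro w hw
    simp only [Set.mem_setOf_eq] at hw ⊢
    simp [Polynomial.IsRoot, hw]
  have : {z : Circle | (z : ℂ) ^ k = 1} = ((↑) : Circle → ℂ) ⁻¹' {w : ℂ | w ^ k = 1} := rfl
  rw [this]
  exact hC.preimage (Circle.coe_injective.injOn)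

/-- **Structure of the level set `{φ = 1}`** (Section 4).
Let `c : ℤ → ℝ` satisfy `c_n ≥ 0` for all `n` and `Σ_{n∈ℤ} c_n ≤ 1`, and define the
continuous function `φ` on the unit circle by `φ(z) = Σ_{n∈ℤ} c_n z^n`.  Then the level set
`{z ∈ 𝕋 : φ(z) = 1}` is either the whole circle or a finite set. -/
theorem stmt7 (c : ℤ → ℝ) (hc0 : ∀ n, 0 ≤ c n) (hsummable : Summable c)
    (hc1 : ∑' n : ℤ, c n ≤ 1)
    (φ : Circle → ℂ) (hφ : ∀ z : Circle, φ z = ∑' n : ℤ, (c n : ℂ) * (z : ℂ) ^ n) :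
    (∀ z : Circle, φ z = 1) ∨ {z : Circle | φ z = 1}.Finite := by
  -- norm facts
  have hnorm : ∀ (z : Circle) (n : ℤ), ‖(z : ℂ) ^ n‖ = 1 := by
    intro z n
    rw [norm_zpow]
    simp [Circle.norm_coe]
  by_cases hA : ∀ n : ℤ, n ≠ 0 → c n = 0
  · -- φ is the constant `c 0`
    have hval : ∀ z : Circle, φ z = (c 0 : ℂ) := by
      intro z
      rw [hφ z, tsum_eq_single 0]
      · simp
      · intro n hn
        simp [hA n hn]
    by_cases h0 : (c 0 : ℂ) = 1
    · left; intro z; rw [hval z, h0]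
    · right
      have : {z : Circle | φ z = 1} = ∅ := by
        ext z
        simp only [Set.mem_setOf_eq, Set.mem_empty_iff_false, iff_false]
        rw [hval z]
        exact h0
      rw [this]; exact Set.finite_empty
  · push_neg at hA
    obtain ⟨m, hm0, hmne⟩ := hA
    have hmpos : 0 < c m := lt_of_le_of_ne (hc0 m) (Ne.symm hmne)
    right
    have hsub : {z : Circle | φ z = 1} ⊆ {z : Circle | (z : ℂ) ^ m.natAbs = 1} := by
      intro z hz
      simp only [Set.mem_setOf_eq] at hz ⊢
      -- the complex series is summable
      have hgsum : Summable (fun n : ℤ => (c n : ℂ) * (z : ℂ) ^ n) := by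
        apply Summable.of_norm_bounded hsummable
        intro n
        rw [norm_mul, hnorm z n, mul_one, Complex.norm_real, Real.norm_eq_abs,
          abs_of_nonneg (hc0 n)]
      -- real parts
      have hfsum : Summable (fun n : ℤ => c n * ((z : ℂ) ^ n).re) := by
        apply Summable.of_norm_bounded hsummable
        intro n
        rw [Real.norm_eq_abs, abs_mul, abs_of_nonneg (hc0 n)]
        calc c n * |((z : ℂ) ^ n).re| ≤ c n * 1 := by
              apply mul_le_mul_of_nonneg_left _ (hc0 n)
              calc |((z : ℂ) ^ n).re| ≤ ‖(z : ℂ) ^ n‖ := Complex.abs_re_le_norm _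
                _ = 1 := hnorm z n
          _ = c n := mul_one _
      have hre : (1 : ℝ) = ∑' n : ℤ, c n * ((z : ℂ) ^ n).re := by
        have h1 : (φ z).re = 1 := by rw [hz]; simp
        rw [← h1, hφ z]
        rw [show ((∑' n : ℤ, (c n : ℂ) * (z : ℂ) ^ n).re)
            = Complex.reCLM (∑' n : ℤ, (c n : ℂ) * (z : ℂ) ^ n) from rfl,
          Complex.reCLM.map_tsum hgsum]
        congr 1
        ext n
        simp [Complex.re_ofReal_mul]
      -- termwise bound
      have hle : ∀ n : ℤ, c n * ((z : ℂ) ^ n).re ≤ c n := by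
        intro n
        calc c n * ((z : ℂ) ^ n).re ≤ c n * 1 := by
              apply mul_le_mul_of_nonneg_left _ (hc0 n)
              calc ((z : ℂ) ^ n).re ≤ |((z : ℂ) ^ n).re| := le_abs_self _
                _ ≤ ‖(z : ℂ) ^ n‖ := Complex.abs_re_le_norm _
                _ = 1 := hnorm z n
          _ = c n := mul_one _
      -- tsum equality
      have heq : ∑' n : ℤ, c n * ((z : ℂ) ^ n).re = ∑' n : ℤ, c n := by
        have h2 : ∑' n : ℤ, c n * ((z : ℂ) ^ n).re ≤ ∑' n : ℤ, c n :=
          Summable.tsum_le_tsum hle hfsum hsummable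
        have h3 : ∑' n : ℤ, c n ≤ ∑' n : ℤ, c n * ((z : ℂ) ^ n).re := by
          rw [← hre]; exact hc1
        linarith
      -- equality at m
      have hm : c m * ((z : ℂ) ^ m).re = c m := by
        by_contra hne2
        have hlt : c m * ((z : ℂ) ^ m).re < c m := lt_of_le_of_ne (hle m) hne2
        have := Summable.tsum_lt_tsum hle hlt hfsum hsummable
        rw [heq] at this
        exact lt_irrefl _ this
      have hre1 : ((z : ℂ) ^ m).re = 1 := by
        have := hm
        nlinarith [hmpos]
      -- |z^m| = 1 and re = 1 gives z^m = 1
      have hzm : (z : ℂ) ^ m = 1 := by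
        have habs : ‖(z : ℂ) ^ m‖ = 1 := hnorm z m
        have him : ((z : ℂ) ^ m).im = 0 := by
          have hsq : ((z : ℂ) ^ m).re ^ 2 + ((z : ℂ) ^ m).im ^ 2 = 1 := by
            have := Complex.sq_norm ((z : ℂ) ^ m)
            rw [Complex.normSq_apply] at this
            rw [show ‖(z : ℂ) ^ m‖ = 1 from habs] at this
            nlinarith [this]
          nlinarith [hre1]
        apply Complex.ext
        · rw [hre1]; simp
        · rw [him]; simp
      -- from z^m = 1 (integer power) to natural power
      rcases Int.natAbs_eq m with h | h
      · rw [h] at hzm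
        rw [zpow_natCast] at hzm
        exact hzm
      · rw [h] at hzm
        rw [zpow_neg, zpow_natCast, inv_eq_one] at hzm
        exact hzm
    exact (circle_pow_finite m.natAbs (by simpa using hm0)).subset hsub
end
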